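/- arXiv:1705.01708 — 2 statements merged into one kernel-verified Lean document; each statement's English description precedes it below -/
import Mathlib

section
/- (PU-AUC risk identity) Under the marginal decomposition p = θ_P·p_P + θ_N·p_N with θ_N > 0, the PN-AUC risk R_PN(f) = E_{x~p_P} E_{x'~p_N}[ℓ(f(x,x'))] equals (1/θ_N)·E_{x~p_P} E_{x'~p}[ℓ(f(x,x'))] − (θ_P/θ_N)·E_{x~p_P} E_{x'~p_P}[ℓ(f(x,x'))]. -/
open MeasureTheory

/-- PU-AUC risk identity: the PN-AUC risk can be expressed using only the
positive and unlabeled (marginal) distributions. -/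
theorem pu_auc_risk_identity
    {d : ℕ} (pP pN : Measure (Fin d → ℝ))
    [IsProbabilityMeasure pP] [IsProbabilityMeasure pN]
    (θP θN : ℝ) (hθP : θP ∈ Set.Ioo (0:ℝ) 1) (hθN : θN ∈ Set.Ioo (0:ℝ) 1)
    (hsum : θP + θN = 1)
    (p : Measure (Fin d → ℝ))
    (hp : p = (ENNReal.ofReal θP) • pP + (ENNReal.ofReal θN) • pN)
    (ℓ : ℝ → ℝ) (hℓm : Measurable ℓ) (C : ℝ) (hℓb : ∀ m, |ℓ m| ≤ C)
    (f : (Fin d → ℝ) → (Fin d → ℝ) → ℝ)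
    (hf : Measurable (fun q : (Fin d → ℝ) × (Fin d → ℝ) => f q.1 q.2)) :
    ∫ x, ∫ x', ℓ (f x x') ∂pN ∂pP
      = (1 / θN) * ∫ x, ∫ x', ℓ (f x x') ∂p ∂pP
        - (θP / θN) * ∫ x, ∫ x', ℓ (f x x') ∂pP ∂pP := by
  have hθN0 : θN ≠ 0 := ne_of_gt hθN.1
  have hmeas : Measurable fun q : (Fin d → ℝ) × (Fin d → ℝ) => ℓ (f q.1 q.2) :=
    hℓm.comp hf
  -- integrability of the inner function w.r.t. any probability measure
  have hint : ∀ (x : Fin d → ℝ) (ν : Measure (Fin d → ℝ)) [IsProbabilityMeasure ν],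
      Integrable (fun x' => ℓ (f x x')) ν := by
    intro x ν _
    refine ⟨(hmeas.comp (measurable_prodMk_left : Measurable fun x' => (x, x'))).aestronglyMeasurable, ?_⟩
    exact HasFiniteIntegral.of_bounded (C := C) (ae_of_all _ fun a => hℓb _)
  have hinner : ∀ x, ∫ x', ℓ (f x x') ∂p
      = θP * ∫ x', ℓ (f x x') ∂pP + θN * ∫ x', ℓ (f x x') ∂pN := by
    intro x
    rw [hp, integral_add_measure ((hint x pP).smul_measure (by simp))
        ((hint x pN).smul_measure (by simp)),
      integral_smul_measure, integral_smul_measure,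
      ENNReal.toReal_ofReal hθP.1.le, ENNReal.toReal_ofReal hθN.1.le, smul_eq_mul, smul_eq_mul]
  -- integrability of outer integrals
  have houter : ∀ (ν : Measure (Fin d → ℝ)) [IsProbabilityMeasure ν],
      Integrable (fun x => ∫ x', ℓ (f x x') ∂ν) pP := by
    intro ν _
    refine ⟨(hmeas.stronglyMeasurable.integral_prod_right').aestronglyMeasurable, ?_⟩
    refine HasFiniteIntegral.of_bounded (C := C) (ae_of_all _ fun x => ?_)
    calc ‖∫ x', ℓ (f x x') ∂ν‖ ≤ C * (ν Set.univ).toReal :=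
          norm_integral_le_of_norm_le_const (ae_of_all _ fun a => hℓb _)
      _ = C := by simp
  simp only [hinner]
  rw [integral_add ((houter pP).const_mul _) ((houter pN).const_mul _),
    integral_const_mul, integral_const_mul]
  field_simp
  ring
end

section
/- (NU-AUC risk identity) Under the marginal decomposition p = θ_P·p_P + θ_N·p_N with θ_P > 0, the PN-AUC risk R_PN(f) = E_{x~p_P} E_{x'~p_N}[ℓ(f(x,x'))] equals (1/θ_P)·E_{x~p} E_{x'~p_N}[ℓ(f(x,x'))] − (θ_N/θ_P)·E_{x~p_N} E_{x'~p_N}[ℓ(f(x,x'))]. -/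
open MeasureTheory

/-- NU-AUC risk identity: the PN-AUC risk can be expressed using only the
negative and unlabeled (marginal) distributions. -/
theorem nu_auc_risk_identity
    {d : ℕ} (pP pN : Measure (Fin d → ℝ))
    [IsProbabilityMeasure pP] [IsProbabilityMeasure pN]
    (θP θN : ℝ) (hθP : θP ∈ Set.Ioo (0:ℝ) 1) (hθN : θN ∈ Set.Ioo (0:ℝ) 1)
    (hsum : θP + θN = 1)
    (p : Measure (Fin d → ℝ))
    (hp : p = (ENNReal.ofReal θP) • pP + (ENNReal.ofReal θN) • pN)
    (ℓ : ℝ → ℝ) (hℓm : Measurable ℓ) (C : ℝ) (hℓb : ∀ m, |ℓ m| ≤ C)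
    (f : (Fin d → ℝ) → (Fin d → ℝ) → ℝ)
    (hf : Measurable (fun q : (Fin d → ℝ) × (Fin d → ℝ) => f q.1 q.2)) :
    ∫ x, ∫ x', ℓ (f x x') ∂pN ∂pP
      = (1 / θP) * ∫ x, ∫ x', ℓ (f x x') ∂pN ∂p
        - (θN / θP) * ∫ x, ∫ x', ℓ (f x x') ∂pN ∂pN := by
  set g : (Fin d → ℝ) → ℝ := fun x => ∫ x', ℓ (f x x') ∂pN with hg
  have hgm : StronglyMeasurable g := by
    apply StronglyMeasurable.integral_prod_right'
      (f := fun q : (Fin d → ℝ) × (Fin d → ℝ) => ℓ (f q.1 q.2))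
    exact (hℓm.comp hf).stronglyMeasurable
  have hgb : ∀ x, |g x| ≤ C := by
    intro x
    calc |g x| ≤ ∫ x', |ℓ (f x x')| ∂pN := by simpa using norm_integral_le_integral_norm (fun x' => ℓ (f x x'))
    _ ≤ ∫ _x', C ∂pN := by
        apply integral_mono_of_nonneg (Filter.Eventually.of_forall fun _ => abs_nonneg _)
          (integrable_const C) (Filter.Eventually.of_forall fun x' => hℓb _)
    _ = C := by simp
  have hint : ∀ (μ : Measure (Fin d → ℝ)) [IsProbabilityMeasure μ], Integrable g μ := by
    intro μ _
    refine ⟨hgm.aestronglyMeasurable, ?_⟩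
    apply HasFiniteIntegral.of_bounded (C := C) (Filter.Eventually.of_forall ?_)
    intro x; simpa using hgb x
  have hsplit : ∫ x, g x ∂p = θP * ∫ x, g x ∂pP + θN * ∫ x, g x ∂pN := by
    rw [hp, integral_add_measure, integral_smul_measure, integral_smul_measure]
    · rw [ENNReal.toReal_ofReal hθP.1.le, ENNReal.toReal_ofReal hθN.1.le]
      simp [smul_eq_mul]
    · exact (hint pP).smul_measure ENNReal.ofReal_ne_top
    · exact (hint pN).smul_measure ENNReal.ofReal_ne_top
  have hθP0 : θP ≠ 0 := ne_of_gt hθP.1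
  show (∫ x, g x ∂pP) = (1 / θP) * ∫ x, g x ∂p - (θN / θP) * ∫ x, g x ∂pN
  rw [hsplit]; field_simp; ring
end
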